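/- Define on the free ℂ-module with basis {B^n_k : n,k ∈ ℕ} the bilinear bracket determined by [B^n_k, B^N_K] = (kN − Kn) B^{n+N−1}_{k+K−1} (where indices of the resulting generator stay in ℕ, noting n+N−1 ≥ 0 and k+K−1 ≥ 0 whenever the coefficient kN−Kn is nonzero). Then this bracket is alternating and satisfies the Jacobi identity, so it defines a Lie algebra structure (the RHPWN Lie algebra with trivial test function algebra). -/

import Mathlib

/-- The RHPWN bracket on the free ℂ-module with basis `{B^n_k : (n,k) ∈ ℕ × ℕ}`,
determined bilinearly by `[B^n_k, B^N_K] = (kN − Kn) B^{n+N−1}_{k+K−1}`. -/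
noncomputable def rhpwnBracket (x y : (ℕ × ℕ) →₀ ℂ) : (ℕ × ℕ) →₀ ℂ :=
  x.sum fun a ca => y.sum fun b cb =>
    (ca * cb * ((a.2 * b.1 - b.2 * a.1 : ℤ) : ℂ)) •
      Finsupp.single (a.1 + b.1 - 1, a.2 + b.2 - 1) (1 : ℂ)

namespace RHPWNAux

noncomputable def Fb (a b : ℕ × ℕ) : (ℕ × ℕ) →₀ ℂ :=
  ((a.2 * b.1 - b.2 * a.1 : ℤ) : ℂ) • Finsupp.single (a.1 + b.1 - 1, a.2 + b.2 - 1) (1 : ℂ)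

noncomputable def Bmap : ((ℕ × ℕ) →₀ ℂ) →ₗ[ℂ] ((ℕ × ℕ) →₀ ℂ) →ₗ[ℂ] ((ℕ × ℕ) →₀ ℂ) :=
  Finsupp.lsum ℂ fun a => LinearMap.toSpanSingleton ℂ _
    (Finsupp.lsum ℂ fun b => LinearMap.toSpanSingleton ℂ _ (Fb a b))

theorem bracket_eq (x y : (ℕ × ℕ) →₀ ℂ) : rhpwnBracket x y = Bmap x y := by
  rw [rhpwnBracket, Bmap, Finsupp.lsum_apply, Finsupp.sum, Finsupp.sum, LinearMap.sum_apply]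
  refine Finset.sum_congr rfl fun a _ => ?_
  rw [LinearMap.toSpanSingleton_apply, LinearMap.smul_apply, Finsupp.lsum_apply,
    Finsupp.smul_sum]
  refine Finsupp.sum_congr fun b _ => ?_
  rw [LinearMap.toSpanSingleton_apply, Fb, smul_smul, smul_smul, mul_assoc]

theorem Bsingle (a b : ℕ × ℕ) (c d : ℂ) :
    Bmap (Finsupp.single a c) (Finsupp.single b d) = (c * d) • Fb a b := by
  simp only [Bmap, Finsupp.lsum_single, LinearMap.smul_apply, LinearMap.toSpanSingleton_apply,
    smul_smul]

theorem Fb_antisym (a b : ℕ × ℕ) : Fb a b + Fb b a = 0 := by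
  rw [Fb, Fb, add_comm b.1, add_comm b.2]
  rw [← add_smul]
  convert zero_smul ℂ _
  push_cast
  ring

/-- the embedding into integer indices -/
noncomputable def Phi : ((ℕ × ℕ) →₀ ℂ) →ₗ[ℂ] ((ℤ × ℤ) →₀ ℂ) :=
  Finsupp.lmapDomain ℂ ℂ (fun p : ℕ × ℕ => ((p.1 : ℤ), (p.2 : ℤ)))

theorem Phi_inj : Function.Injective Phi := by
  apply Finsupp.mapDomain_injective
  intro p q h
  simp only [Prod.mk.injEq] at h
  exact Prod.ext (by exact_mod_cast h.1) (by exact_mod_cast h.2)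

theorem phi_Fb (a b : ℕ × ℕ) :
    Phi (Fb a b) = ((a.2 * b.1 - b.2 * a.1 : ℤ) : ℂ) •
      Finsupp.single ((a.1 : ℤ) + b.1 - 1, (a.2 : ℤ) + b.2 - 1) (1 : ℂ) := by
  by_cases h : (a.2 * b.1 - b.2 * a.1 : ℤ) = 0
  · rw [Fb, h]; push_cast; simp
  · have h1 : 1 ≤ a.1 + b.1 := by
      by_contra hc
      have ha : a.1 = 0 ∧ b.1 = 0 := by omega
      apply h; rw [ha.1, ha.2]; push_cast; ring
    have h2 : 1 ≤ a.2 + b.2 := by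
      by_contra hc
      have ha : a.2 = 0 ∧ b.2 = 0 := by omega
      apply h; rw [ha.1, ha.2]; push_cast; ring
    rw [Fb, map_smul, Phi, Finsupp.lmapDomain_apply, Finsupp.mapDomain_single]
    have e1 : ((a.1 + b.1 - 1 : ℕ) : ℤ) = (a.1 : ℤ) + b.1 - 1 := by omega
    have e2 : ((a.2 + b.2 - 1 : ℕ) : ℤ) = (a.2 : ℤ) + b.2 - 1 := by omega
    simp [e1, e2]

theorem phi_term (a b c : ℕ × ℕ) :
    Phi (((b.2 * c.1 - c.2 * b.1 : ℤ) : ℂ) • Fb a (b.1 + c.1 - 1, b.2 + c.2 - 1)) =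
    (((b.2 * c.1 - c.2 * b.1) *
        (a.2 * ((b.1 : ℤ) + c.1 - 1) - ((b.2 : ℤ) + c.2 - 1) * a.1) : ℤ) : ℂ) •
      Finsupp.single ((a.1 : ℤ) + b.1 + c.1 - 2, (a.2 : ℤ) + b.2 + c.2 - 2) (1 : ℂ) := by
  by_cases h : (b.2 * c.1 - c.2 * b.1 : ℤ) = 0
  · rw [h]; push_cast; simp
  · have h1 : 1 ≤ b.1 + c.1 := by
      by_contra hc
      have ha : b.1 = 0 ∧ c.1 = 0 := by omega
      apply h; rw [ha.1, ha.2]; push_cast; ring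
    have h2 : 1 ≤ b.2 + c.2 := by
      by_contra hc
      have ha : b.2 = 0 ∧ c.2 = 0 := by omega
      apply h; rw [ha.1, ha.2]; push_cast; ring
    rw [map_smul, phi_Fb]
    have e1 : ((b.1 + c.1 - 1 : ℕ) : ℤ) = (b.1 : ℤ) + c.1 - 1 := by omega
    have e2 : ((b.2 + c.2 - 1 : ℕ) : ℤ) = (b.2 : ℤ) + c.2 - 1 := by omega
    simp only [smul_smul, e1, e2]
    congr 1
    · push_cast; ring
    · congr 2 <;> ring

theorem keyJ (a b c : ℕ × ℕ) :
    ((b.2 * c.1 - c.2 * b.1 : ℤ) : ℂ) • Fb a (b.1 + c.1 - 1, b.2 + c.2 - 1) +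
    ((c.2 * a.1 - a.2 * c.1 : ℤ) : ℂ) • Fb b (c.1 + a.1 - 1, c.2 + a.2 - 1) +
    ((a.2 * b.1 - b.2 * a.1 : ℤ) : ℂ) • Fb c (a.1 + b.1 - 1, a.2 + b.2 - 1) = 0 := by
  apply Phi_inj
  rw [map_add, map_add, map_zero, phi_term a b c, phi_term b c a, phi_term c a b]
  have p1 : ((b.1 : ℤ) + c.1 + a.1 - 2, (b.2 : ℤ) + c.2 + a.2 - 2) =
      ((a.1 : ℤ) + b.1 + c.1 - 2, (a.2 : ℤ) + b.2 + c.2 - 2) := by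
    congr 1 <;> ring
  have p2 : ((c.1 : ℤ) + a.1 + b.1 - 2, (c.2 : ℤ) + a.2 + b.2 - 2) =
      ((a.1 : ℤ) + b.1 + c.1 - 2, (a.2 : ℤ) + b.2 + c.2 - 2) := by
    congr 1 <;> ring
  rw [p1, p2, ← add_smul, ← add_smul]
  convert zero_smul ℂ _
  push_cast
  ring

theorem B_antisym : Bmap + Bmap.flip = 0 := by
  apply Finsupp.lhom_ext
  intro a c
  apply Finsupp.lhom_ext
  intro b d
  simp only [LinearMap.add_apply, LinearMap.flip_apply, LinearMap.zero_apply, Finsupp.coe_zero,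
    Bsingle]
  rw [mul_comm d c, ← smul_add, Fb_antisym, smul_zero]

theorem B_alt (x : (ℕ × ℕ) →₀ ℂ) : Bmap x x = 0 := by
  have h : Bmap x x + Bmap.flip x x = 0 := by
    rw [← LinearMap.add_apply, ← LinearMap.add_apply, B_antisym]; rfl
  rw [LinearMap.flip_apply] at h
  have h2 : (2 : ℂ) • Bmap x x = 0 := by rw [two_smul]; exact h
  have := smul_eq_zero.mp h2
  simpa using this

theorem B_nested (a b c : ℕ × ℕ) :
    Bmap (Finsupp.single a 1) (Bmap (Finsupp.single b 1) (Finsupp.single c 1)) =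
      ((b.2 * c.1 - c.2 * b.1 : ℤ) : ℂ) • Fb a (b.1 + c.1 - 1, b.2 + c.2 - 1) := by
  rw [Bsingle, one_mul, one_smul, Fb, map_smul, Bsingle, one_mul, one_smul]

theorem jacobi (x y z : (ℕ × ℕ) →₀ ℂ) :
    Bmap x (Bmap y z) + Bmap y (Bmap z x) + Bmap z (Bmap x y) = 0 := by
  induction x using Finsupp.induction_linear with
  | zero => simp
  | add x1 x2 hx1 hx2 =>
    have h := congrArg₂ (· + ·) hx1 hx2
    simp only [add_zero] at h
    simp only [map_add, LinearMap.add_apply]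
    rw [← h]; abel
  | single a ca =>
    induction y using Finsupp.induction_linear with
    | zero => simp
    | add y1 y2 hy1 hy2 =>
      have h := congrArg₂ (· + ·) hy1 hy2
      simp only [add_zero] at h
      simp only [map_add, LinearMap.add_apply]
      rw [← h]; abel
    | single b cb =>
      induction z using Finsupp.induction_linear with
      | zero => simp
      | add z1 z2 hz1 hz2 =>
        have h := congrArg₂ (· + ·) hz1 hz2
        simp only [add_zero] at h
        simp only [map_add, LinearMap.add_apply]
        rw [← h]; abel
      | single c cc =>
        have ea : Finsupp.single a ca = ca • Finsupp.single a (1 : ℂ) := by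
          rw [Finsupp.smul_single', mul_one]
        have eb : Finsupp.single b cb = cb • Finsupp.single b (1 : ℂ) := by
          rw [Finsupp.smul_single', mul_one]
        have ec : Finsupp.single c cc = cc • Finsupp.single c (1 : ℂ) := by
          rw [Finsupp.smul_single', mul_one]
        rw [ea, eb, ec]
        simp only [map_smul, LinearMap.smul_apply, smul_smul]
        rw [B_nested, B_nested, B_nested]
        trans (ca * cb * cc) •
          (((b.2 * c.1 - c.2 * b.1 : ℤ) : ℂ) • Fb a (b.1 + c.1 - 1, b.2 + c.2 - 1) +
           ((c.2 * a.1 - a.2 * c.1 : ℤ) : ℂ) • Fb b (c.1 + a.1 - 1, c.2 + a.2 - 1) +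
           ((a.2 * b.1 - b.2 * a.1 : ℤ) : ℂ) • Fb c (a.1 + b.1 - 1, a.2 + b.2 - 1))
        · module
        · rw [keyJ, smul_zero]

end RHPWNAux

/-- the RHPWN bracket is alternating and satisfies the Jacobi
identity, hence defines a Lie algebra structure (the RHPWN Lie algebra with
trivial test function algebra). -/
theorem rhpwnBracket_alternating_and_jacobi :
    (∀ x : (ℕ × ℕ) →₀ ℂ, rhpwnBracket x x = 0) ∧
    (∀ x y z : (ℕ × ℕ) →₀ ℂ,
      rhpwnBracket x (rhpwnBracket y z) + rhpwnBracket y (rhpwnBracket z x) +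
        rhpwnBracket z (rhpwnBracket x y) = 0) := by
  constructor
  · intro x
    rw [RHPWNAux.bracket_eq]
    exact RHPWNAux.B_alt x
  · intro x y z
    simp only [RHPWNAux.bracket_eq]
    exact RHPWNAux.jacobi x y z
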